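/- Suppose û₀ ∈ S(ℝ²) satisfies |û₀(k,l)| ≤ C_N/((1+|k|^N)(1+|l|^N)) for all N. Define ṽ(k,ω) = (i|ω|/2π)·𝟙_{|ω|≥|k|}·û₀(k, √(ω²−k²)). Then for every k, ∫_{−∞}^{∞} |ṽ(k,ω)| dω ≤ C/(1+k²) for some constant C independent of k. In particular ṽ ∈ L¹(ℝ²). -/

import Mathlib

set_option maxHeartbeats 1000000


open MeasureTheory

noncomputable def vtil (u₀ : ℝ × ℝ → ℂ) (k ω : ℝ) : ℂ :=
  (Complex.I * |ω| / (2 * Real.pi)) *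
    (if |k| ≤ |ω| then u₀ (k, Real.sqrt (ω ^ 2 - k ^ 2)) else 0)

lemma vtil_meas (u₀ : SchwartzMap (ℝ × ℝ) ℂ) :
    Measurable (fun p : ℝ × ℝ => vtil (fun q => u₀ q) p.1 p.2) := by
  unfold vtil
  apply Measurable.mul
  · apply Measurable.div
    · exact (Complex.measurable_ofReal.comp (measurable_snd.abs)).const_mul _
    · exact measurable_const
  · apply Measurable.ite (measurableSet_le measurable_fst.abs measurable_snd.abs)
    · exact u₀.continuous.measurable.comp
        (measurable_fst.prodMk ((measurable_snd.pow_const 2).sub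
          (measurable_fst.pow_const 2)).sqrt)
    · exact measurable_const

lemma vtil_norm_le (u₀ : SchwartzMap (ℝ × ℝ) ℂ) (C : ℝ) (hC : 0 ≤ C)
    (h : ∀ x : ℝ × ℝ, (1 + ‖x‖) ^ 6 * ‖u₀ x‖ ≤ C) (k ω : ℝ) :
    ‖vtil (fun q => u₀ q) k ω‖ ≤ (4 * C) * (1 + k ^ 2)⁻¹ * (1 + ω ^ 2)⁻¹ := by
  have hk2 : (0:ℝ) < 1 + k ^ 2 := by positivity
  have hω2 : (0:ℝ) < 1 + ω ^ 2 := by positivity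
  unfold vtil
  by_cases hkω : |k| ≤ |ω|
  · simp only [if_pos hkω]
    set l := Real.sqrt (ω ^ 2 - k ^ 2) with hl
    have hl0 : 0 ≤ l := Real.sqrt_nonneg _
    have hk2ω2 : k ^ 2 ≤ ω ^ 2 := by
      nlinarith [sq_abs k, sq_abs ω, abs_nonneg k, abs_nonneg ω]
    have hsq : l ^ 2 = ω ^ 2 - k ^ 2 := Real.sq_sqrt (by linarith)
    set p : ℝ × ℝ := (k, l) with hp
    have hpn : ‖p‖ = max |k| l := by
      rw [Prod.norm_def]
      simp [p, Real.norm_eq_abs, abs_of_nonneg hl0]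
    set m := max |k| l with hm
    have hm0 : 0 ≤ m := le_trans (abs_nonneg k) (le_max_left _ _)
    have hmk : |k| ≤ m := le_max_left _ _
    have hml : l ≤ m := le_max_right _ _
    have hω_sq : ω ^ 2 ≤ 2 * m ^ 2 := by
      linarith [sq_abs k, pow_le_pow_left₀ (abs_nonneg k) hmk 2, pow_le_pow_left₀ hl0 hml 2, hsq]
    have h1 : (1 + |ω|) ^ 2 ≤ 2 * (1 + m) ^ 2 := by
      nlinarith [sq_abs ω, abs_nonneg ω, sq_nonneg (1 + 2*m - |ω|)]
    have e2 : (1 + |ω|) ^ 4 ≤ 4 * (1 + m) ^ 4 := by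
      calc (1 + |ω|) ^ 4 = ((1 + |ω|) ^ 2) ^ 2 := by ring
        _ ≤ (2 * (1 + m) ^ 2) ^ 2 := pow_le_pow_left₀ (by positivity) h1 2
        _ = 4 * (1 + m) ^ 4 := by ring
    have h2 : (1 + |k|) ^ 2 * (1 + |ω|) ^ 4 ≤ 4 * (1 + m) ^ 6 := by
      calc (1 + |k|) ^ 2 * (1 + |ω|) ^ 4
          ≤ (1 + m) ^ 2 * (4 * (1 + m) ^ 4) :=
            mul_le_mul (pow_le_pow_left₀ (by positivity) (by linarith) 2) e2
              (by positivity) (by positivity)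
        _ = 4 * (1 + m) ^ 6 := by ring
    have hup := h p
    rw [hpn] at hup
    have haux : |ω| * ((1 + k ^ 2) * (1 + ω ^ 2)) ≤ (1 + |k|) ^ 2 * (1 + |ω|) ^ 4 := by
      have ha : (1 + k ^ 2) ≤ (1 + |k|) ^ 2 := by nlinarith [abs_nonneg k, sq_abs k]
      have hw : |ω| * (1 + ω ^ 2) ≤ (1 + |ω|) ^ 4 := by
        nlinarith [abs_nonneg ω, sq_abs ω, pow_nonneg (abs_nonneg ω) 2,
          pow_nonneg (abs_nonneg ω) 3, pow_nonneg (abs_nonneg ω) 4]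
      calc |ω| * ((1 + k ^ 2) * (1 + ω ^ 2)) = (1 + k ^ 2) * (|ω| * (1 + ω ^ 2)) := by ring
        _ ≤ (1 + |k|) ^ 2 * (1 + |ω|) ^ 4 :=
            mul_le_mul ha hw (by positivity) (by positivity)
    have hnn : (0:ℝ) ≤ ‖u₀ p‖ := norm_nonneg _
    have key : ‖u₀ p‖ * (|ω| * ((1 + k ^ 2) * (1 + ω ^ 2))) ≤ 4 * C := by
      calc ‖u₀ p‖ * (|ω| * ((1 + k ^ 2) * (1 + ω ^ 2)))
          ≤ ‖u₀ p‖ * ((1 + |k|) ^ 2 * (1 + |ω|) ^ 4) :=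
            mul_le_mul_of_nonneg_left haux hnn
        _ ≤ ‖u₀ p‖ * (4 * (1 + m) ^ 6) := mul_le_mul_of_nonneg_left h2 hnn
        _ = 4 * ((1 + m) ^ 6 * ‖u₀ p‖) := by ring
        _ ≤ 4 * C := by linarith
    have hnorm : ‖Complex.I * (|ω| : ℝ) / (2 * (Real.pi : ℂ)) * u₀ p‖
        = |ω| / (2 * Real.pi) * ‖u₀ p‖ := by
      rw [norm_mul, norm_div, norm_mul, Complex.norm_I, one_mul, Complex.norm_real]
      rw [show ((2 : ℂ) * (Real.pi : ℂ)) = ((2 * Real.pi : ℝ) : ℂ) by push_cast; ring]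
      rw [Complex.norm_real, Real.norm_eq_abs, Real.norm_eq_abs, abs_abs,
        abs_of_pos (by positivity : (0:ℝ) < 2 * Real.pi)]
    rw [hnorm]
    have h2π : (1:ℝ) ≤ 2 * Real.pi := by nlinarith [Real.pi_gt_three]
    have step1 : |ω| / (2 * Real.pi) * ‖u₀ p‖ ≤ |ω| * ‖u₀ p‖ := by
      apply mul_le_mul_of_nonneg_right _ hnn
      rw [div_le_iff₀ (by positivity)]
      nlinarith [abs_nonneg ω]
    refine le_trans step1 ?_
    rw [show (4 * C) * (1 + k ^ 2)⁻¹ * (1 + ω ^ 2)⁻¹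
        = (4 * C) / ((1 + k ^ 2) * (1 + ω ^ 2)) by field_simp]
    rw [le_div_iff₀ (by positivity)]
    calc |ω| * ‖u₀ p‖ * ((1 + k ^ 2) * (1 + ω ^ 2))
        = ‖u₀ p‖ * (|ω| * ((1 + k ^ 2) * (1 + ω ^ 2))) := by ring
      _ ≤ 4 * C := key
  · simp only [if_neg hkω, mul_zero, norm_zero]
    positivity

theorem vtil_L1_bound (u₀ : SchwartzMap (ℝ × ℝ) ℂ) :
    ∃ C : ℝ,
      (∀ k : ℝ, ∫ ω : ℝ, ‖vtil (fun p => u₀ p) k ω‖ ≤ C / (1 + k ^ 2)) ∧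
      Integrable (fun p : ℝ × ℝ => vtil (fun q => u₀ q) p.1 p.2) := by
  obtain ⟨C0, hC0, h0⟩ := u₀.decay 0 0
  obtain ⟨C6, hC6, h6⟩ := u₀.decay 6 0
  set C : ℝ := 64 * (C0 + C6) with hCdef
  have hC : 0 ≤ C := by positivity
  have hbound : ∀ x : ℝ × ℝ, (1 + ‖x‖) ^ 6 * ‖u₀ x‖ ≤ C := by
    intro x
    have h0x := h0 x
    have h6x := h6 x
    simp only [norm_iteratedFDeriv_zero, pow_zero, one_mul] at h0x h6x
    have hx : (0:ℝ) ≤ ‖x‖ := norm_nonneg x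
    have key : (1 + ‖x‖) ^ 6 ≤ 64 * (1 + ‖x‖ ^ 6) := by
      rcases le_total ‖x‖ 1 with hle | hle
      · calc (1 + ‖x‖) ^ 6 ≤ 2 ^ 6 := pow_le_pow_left₀ (by positivity) (by linarith) 6
          _ ≤ 64 * (1 + ‖x‖ ^ 6) := by nlinarith [pow_nonneg hx 6]
      · calc (1 + ‖x‖) ^ 6 ≤ (2 * ‖x‖) ^ 6 := pow_le_pow_left₀ (by positivity) (by linarith) 6
          _ = 64 * ‖x‖ ^ 6 := by ring
          _ ≤ 64 * (1 + ‖x‖ ^ 6) := by nlinarith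
    calc (1 + ‖x‖) ^ 6 * ‖u₀ x‖ ≤ 64 * (1 + ‖x‖ ^ 6) * ‖u₀ x‖ :=
          mul_le_mul_of_nonneg_right key (norm_nonneg _)
      _ = 64 * ‖u₀ x‖ + 64 * (‖x‖ ^ 6 * ‖u₀ x‖) := by ring
      _ ≤ 64 * C0 + 64 * C6 := by linarith [h0x, h6x]
      _ = C := by rw [hCdef]; ring
  have hpt := vtil_norm_le u₀ C hC hbound
  have hmeas := vtil_meas u₀
  have hk_int : ∀ k : ℝ, Integrable (fun ω => vtil (fun q => u₀ q) k ω) := by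
    intro k
    have m1 : Measurable fun ω : ℝ => vtil (fun q => u₀ q) k ω := by
      have hcomp := hmeas.comp (measurable_prodMk_left (x := k))
      exact hcomp
    apply Integrable.mono' (integrable_inv_one_add_sq.const_mul ((4 * C) * (1 + k ^ 2)⁻¹))
      m1.aestronglyMeasurable
    filter_upwards with ω
    exact hpt k ω
  refine ⟨4 * C * Real.pi, fun k => ?_, ?_⟩
  · have hk2 : (0:ℝ) < 1 + k ^ 2 := by positivity
    calc ∫ ω : ℝ, ‖vtil (fun p => u₀ p) k ω‖
        ≤ ∫ ω : ℝ, (4 * C) * (1 + k ^ 2)⁻¹ * (1 + ω ^ 2)⁻¹ :=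
          integral_mono (hk_int k).norm
            (integrable_inv_one_add_sq.const_mul ((4 * C) * (1 + k ^ 2)⁻¹))
            (fun ω => hpt k ω)
      _ = (4 * C) * (1 + k ^ 2)⁻¹ * Real.pi := by
          rw [MeasureTheory.integral_const_mul, integral_univ_inv_one_add_sq]
      _ = 4 * C * Real.pi / (1 + k ^ 2) := by field_simp
  · apply Integrable.mono' ?_ hmeas.aestronglyMeasurable
    · filter_upwards with p
      exact hpt p.1 p.2
    · have hint := (integrable_inv_one_add_sq.const_mul (4 * C)).mul_prod
        integrable_inv_one_add_sq (L := ℝ)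
      rw [← Measure.volume_eq_prod] at hint
      exact hint
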